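/- Distinct-background subtraction is one-way only: for pairwise distinct tokens t_s, t_{b1}, t_{b2} (t_s ≠ t_{b1}, t_s ≠ t_{b2}, t_{b1} ≠ t_{b2}), rationals slo ≤ shi and blo < bhi, and dimension tag d, OneWayOnly (Sub (Add (Meas t_s slo shi d) (Meas t_{b1} blo bhi d)) (Meas t_{b2} blo bhi d)) (Meas t_s slo shi d) holds. -/
import Mathlib


abbrev Token := ℕ

inductive Dim where
  | base
deriving DecidableEq

inductive Expr where
  | Exact (q : ℚ) (d : Dim)
  | Meas (t : Token) (lo hi : ℚ) (d : Dim)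
  | Add (a b : Expr)
  | Sub (a b : Expr)
  | Mul (a b : Expr)
  | Div (a b : Expr)
  | Neg (a : Expr)

abbrev TokenEnv := Token → ℚ

def TokenConsistent (σ : TokenEnv) : Expr → Prop
  | .Exact _ _ => True
  | .Meas t lo hi _ => lo ≤ σ t ∧ σ t ≤ hi
  | .Add a b => TokenConsistent σ a ∧ TokenConsistent σ b
  | .Sub a b => TokenConsistent σ a ∧ TokenConsistent σ b
  | .Mul a b => TokenConsistent σ a ∧ TokenConsistent σ b
  | .Div a b => TokenConsistent σ a ∧ TokenConsistent σ b
  | .Neg a => TokenConsistent σ a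

def eval (σ : TokenEnv) : Expr → ℚ
  | .Exact q _ => q
  | .Meas t _ _ _ => σ t
  | .Add a b => eval σ a + eval σ b
  | .Sub a b => eval σ a - eval σ b
  | .Mul a b => eval σ a * eval σ b
  | .Div a b => eval σ a / eval σ b
  | .Neg a => - eval σ a

def Encl (e : Expr) : Set ℚ := {v : ℚ | ∃ σ : TokenEnv, TokenConsistent σ e ∧ eval σ e = v}

def RewritesTo (e e' : Expr) : Prop := Encl e' ⊆ Encl e

def Interchangeable (e e' : Expr) : Prop := Encl e = Encl e'

def OneWayOnly (e e' : Expr) : Prop := RewritesTo e e' ∧ ¬ RewritesTo e' e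

theorem distinct_background_subtraction_one_way_only_to_signal
    (ts tb₁ tb₂ : Token) (h₁ : ts ≠ tb₁) (h₂ : ts ≠ tb₂) (h₃ : tb₁ ≠ tb₂)
    (slo shi blo bhi : ℚ) (hs : slo ≤ shi) (hb : blo < bhi) (d : Dim) :
    OneWayOnly
      (.Sub (.Add (.Meas ts slo shi d) (.Meas tb₁ blo bhi d)) (.Meas tb₂ blo bhi d))
      (.Meas ts slo shi d) := by
  constructor
  · rintro v ⟨σ, hc, hv⟩
    refine ⟨fun t => if t = ts then σ ts else blo, ⟨⟨?_, ?_⟩, ?_, ?_⟩, ?_⟩ <;>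
      simp [eval, TokenConsistent, h₁.symm, h₂.symm, hc.1, hc.2, le_of_lt hb]
    · exact hv ▸ rfl
  · intro h
    have hmem : (shi + bhi - blo) ∈ Encl (.Sub (.Add (.Meas ts slo shi d) (.Meas tb₁ blo bhi d)) (.Meas tb₂ blo bhi d)) := by
      refine ⟨fun t => if t = ts then shi else if t = tb₁ then bhi else blo, ?_, ?_⟩ <;>
        simp [eval, TokenConsistent, h₁.symm, h₂.symm, h₃.symm, hs, le_of_lt hb, h₁, h₃]
    obtain ⟨σ, hc, hv⟩ := h hmem
    have : σ ts ≤ shi := hc.2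
    simp [eval] at hv
    linarith
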